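/- Let T > 0 and N be a positive integer. Let b : [0,T] × ℝᴺ → [0,∞) be continuous and nondecreasing in each of its last N arguments. Let (fₙ)_{n∈ℕ} be functions from [0,T] to ℝᴺ such that fₙ(u) ≤ f_{n+1}(u) componentwise for every u ∈ [0,T] and every n, converging pointwise to a function f : [0,T] → ℝᴺ. Let s ∈ [0,T] be such that every fₙ is continuous at s, and let ([αₙ, βₙ])_{n∈ℕ} be closed subintervals of [0,T] with s ∈ [αₙ, βₙ] for all n and βₙ − αₙ → 0. Then inf_{u ∈ [αₙ, βₙ]} b(u, fₙ(u)) → b(s, f(s)) as n → ∞. -/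

import Mathlib

open Filter Set Topology

/-- Convergence of the infimum-discretized mean-field drifts (Step 3 of the proof of
Theorem 3.1): if `b : [0,T] × ℝᴺ → [0,∞)` is continuous and nondecreasing in its last
`N` arguments, `fₙ : [0,T] → ℝᴺ` increase pointwise (componentwise) to `g`, `s` is a
common continuity point of the `fₙ`, and `[αₙ, βₙ] ⊆ [0,T]` are intervals containing
`s` whose lengths tend to `0`, then
`inf_{u ∈ [αₙ, βₙ]} b(u, fₙ(u)) → b(s, g(s))`. -/
theorem inf_discretized_meanfield_drift_tendsto
    (T : ℝ) (hT : 0 < T) (N : ℕ) (hN : 0 < N)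
    (b : ℝ → (Fin N → ℝ) → ℝ)
    (hb_cont : ContinuousOn (fun p : ℝ × (Fin N → ℝ) => b p.1 p.2)
      (Set.Icc (0 : ℝ) T ×ˢ (Set.univ : Set (Fin N → ℝ))))
    (hb_nonneg : ∀ u ∈ Set.Icc (0 : ℝ) T, ∀ x : Fin N → ℝ, 0 ≤ b u x)
    (hb_mono : ∀ u ∈ Set.Icc (0 : ℝ) T, Monotone (b u))
    (f : ℕ → ℝ → (Fin N → ℝ)) (g : ℝ → (Fin N → ℝ))
    (hf_mono : ∀ n : ℕ, ∀ u ∈ Set.Icc (0 : ℝ) T, f n u ≤ f (n + 1) u)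
    (hf_lim : ∀ u ∈ Set.Icc (0 : ℝ) T,
      Filter.Tendsto (fun n => f n u) Filter.atTop (nhds (g u)))
    (s : ℝ) (hs : s ∈ Set.Icc (0 : ℝ) T)
    (hf_cont : ∀ n : ℕ, ContinuousWithinAt (f n) (Set.Icc (0 : ℝ) T) s)
    (α β : ℕ → ℝ)
    (hmem : ∀ n : ℕ, s ∈ Set.Icc (α n) (β n))
    (hsub : ∀ n : ℕ, Set.Icc (α n) (β n) ⊆ Set.Icc (0 : ℝ) T)
    (hlen : Filter.Tendsto (fun n => β n - α n) Filter.atTop (nhds 0)) :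
    Filter.Tendsto (fun n => sInf ((fun u => b u (f n u)) '' Set.Icc (α n) (β n)))
      Filter.atTop (nhds (b s (g s))) := by
  set L := b s (g s) with hL
  set F : ℕ → ℝ := fun n => sInf ((fun u => b u (f n u)) '' Set.Icc (α n) (β n)) with hF
  -- monotonicity of f in n
  have hmono : ∀ u ∈ Set.Icc (0 : ℝ) T, Monotone (fun m => f m u) := fun u hu =>
    monotone_nat_of_le_succ (fun k => hf_mono k u hu)
  -- Claim A : b s (f m s) → L
  have hA : Tendsto (fun m => b s (f m s)) atTop (nhds L) := by
    have h1 : Tendsto (fun m => ((s, f m s) : ℝ × (Fin N → ℝ))) atTop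
        (nhdsWithin (s, g s) (Set.Icc (0 : ℝ) T ×ˢ (Set.univ : Set (Fin N → ℝ)))) := by
      exact tendsto_nhdsWithin_of_tendsto_nhds_of_eventually_within _
        (tendsto_const_nhds.prodMk_nhds (hf_lim s hs))
        (Filter.Eventually.of_forall fun m => ⟨hs, Set.mem_univ _⟩)
    exact ((hb_cont (s, g s) ⟨hs, Set.mem_univ _⟩).tendsto).comp h1
  -- upper bound : F n ≤ b s (f n s)
  have hbdd : ∀ n : ℕ, BddBelow ((fun u => b u (f n u)) '' Set.Icc (α n) (β n)) := by
    intro n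
    refine ⟨0, ?_⟩
    rintro y ⟨u, hu, rfl⟩
    exact hb_nonneg u (hsub n hu) _
  have hupp : ∀ n : ℕ, F n ≤ b s (f n s) := fun n =>
    csInf_le (hbdd n) ⟨s, hmem n, rfl⟩
  -- lower bound eventually
  have hlow : ∀ ε > (0 : ℝ), ∀ᶠ n in atTop, L - ε < F n := by
    intro ε hε
    -- choose m with b s (f m s) > L - ε/2
    obtain ⟨m, hm⟩ := (hA.eventually (eventually_gt_nhds
      (show L - ε / 2 < L by linarith))).exists
    -- continuity of u ↦ b u (f m u) within Icc at s
    have hcw : Tendsto (fun u => b u (f m u)) (nhdsWithin s (Set.Icc (0 : ℝ) T))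
        (nhds (b s (f m s))) := by
      have hpair : Tendsto (fun u => ((u, f m u) : ℝ × (Fin N → ℝ)))
          (nhdsWithin s (Set.Icc (0 : ℝ) T))
          (nhdsWithin (s, f m s) (Set.Icc (0 : ℝ) T ×ˢ (Set.univ : Set (Fin N → ℝ)))) :=
        tendsto_nhdsWithin_of_tendsto_nhds_of_eventually_within _
          (continuousWithinAt_id.prodMk (hf_cont m))
          (eventually_mem_nhdsWithin.mono fun u hu => ⟨hu, Set.mem_univ _⟩)
      exact ((hb_cont (s, f m s) ⟨hs, Set.mem_univ _⟩).tendsto).comp hpair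
    have hev : ∀ᶠ u in nhdsWithin s (Set.Icc (0 : ℝ) T), L - ε / 2 < b u (f m u) :=
      hcw.eventually (eventually_gt_nhds (show L - ε / 2 < b s (f m s) by linarith))
    rw [Filter.eventually_iff, Metric.mem_nhdsWithin_iff] at hev
    obtain ⟨δ, hδ, hball⟩ := hev
    have hlen' : ∀ᶠ n in atTop, β n - α n < δ := by
      have := hlen.eventually (eventually_lt_nhds hδ)
      simpa using this
    filter_upwards [hlen', Filter.eventually_ge_atTop m] with n hn hnm
    have hFn : L - ε / 2 ≤ F n := by
      refine le_csInf ⟨_, ⟨s, hmem n, rfl⟩⟩ ?_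
      rintro y ⟨u, hu, rfl⟩
      have huT := hsub n hu
      have hball_u : u ∈ Metric.ball s δ := by
        rw [Metric.mem_ball, Real.dist_eq, abs_sub_lt_iff]
        obtain ⟨hu1, hu2⟩ := hu
        obtain ⟨hs1, hs2⟩ := hmem n
        constructor <;> linarith
      have h1 : L - ε / 2 < b u (f m u) := hball ⟨hball_u, huT⟩
      have h2 : b u (f m u) ≤ b u (f n u) :=
        hb_mono u huT (hmono u huT hnm)
      linarith
    linarith
  -- combine
  rw [Metric.tendsto_nhds]
  intro ε hε
  have hup : ∀ᶠ n in atTop, b s (f n s) < L + ε / 2 :=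
    hA.eventually (eventually_lt_nhds (by linarith : L < L + ε / 2))
  filter_upwards [hlow (ε / 2) (by linarith), hup] with n h1 h2
  rw [Real.dist_eq, abs_sub_lt_iff]
  have := hupp n
  constructor <;> linarith
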